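/- Every directed cycle of length n ≥ 2 admits a neighbour-distinguishing proper arc-colouring with 2 colours: if n is even colour the arcs alternately 1,2; if n is odd colour two consecutive arcs with colour 2 and alternate 1,2 on the rest. In both cases, for every arc uv the ordered pairs (S^+(u),S^-(u)) and (S^+(v),S^-(v)) differ. -/
import Mathlib


open Finset

section Defs

variable {V : Type*}

/-- A (proper) arc-colouring: arcs sharing a tail, or sharing a head, get distinct colours. -/
def ProperArc (A : V → V → Prop) (γ : V → V → ℕ) : Prop :=
  (∀ u v w, A u v → A u w → v ≠ w → γ u v ≠ γ u w) ∧
  (∀ u v w, A u v → A w v → u ≠ w → γ u v ≠ γ w v)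

/-- Colours appearing on outgoing arcs of `u`. -/
def outColors (A : V → V → Prop) (γ : V → V → ℕ) (u : V) : Set ℕ :=
  {c | ∃ v, A u v ∧ γ u v = c}

/-- Colours appearing on incoming arcs of `u`. -/
def inColors (A : V → V → Prop) (γ : V → V → ℕ) (u : V) : Set ℕ :=
  {c | ∃ v, A v u ∧ γ v u = c}

/-- `u` and `v` are distinguished by `γ`. -/
def Distinguished (A : V → V → Prop) (γ : V → V → ℕ) (u v : V) : Prop :=
  (outColors A γ u, inColors A γ u) ≠ (outColors A γ v, inColors A γ v)

/-- Neighbour-distinguishing arc-colouring. -/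
def NDArc (A : V → V → Prop) (γ : V → V → ℕ) : Prop :=
  ∀ u v, A u v → Distinguished A γ u v

/-- `D` has a neighbour-distinguishing proper arc-colouring with `k` colours. -/
def HasNDColoring (A : V → V → Prop) (k : ℕ) : Prop :=
  ∃ γ : V → V → ℕ, (∀ u v, A u v → γ u v < k) ∧ ProperArc A γ ∧ NDArc A γ

/-- `D` has a proper arc-colouring with `k` colours. -/
def HasProperColoring (A : V → V → Prop) (k : ℕ) : Prop :=
  ∃ γ : V → V → ℕ, (∀ u v, A u v → γ u v < k) ∧ ProperArc A γ

/-- Outdegree of `u`. -/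
def outDeg [Fintype V] (A : V → V → Prop) [DecidableRel A] (u : V) : ℕ :=
  (Finset.univ.filter fun v => A u v).card

/-- Indegree of `u`. -/
def inDeg [Fintype V] (A : V → V → Prop) [DecidableRel A] (u : V) : ℕ :=
  (Finset.univ.filter fun v => A v u).card

/-- Δ*(D) = max{Δ⁺(D), Δ⁻(D)}. -/
def maxDeg [Fintype V] (A : V → V → Prop) [DecidableRel A] : ℕ :=
  max (Finset.univ.sup (outDeg A)) (Finset.univ.sup (inDeg A))

end Defs

/-- Key numerical lemma: the colouring `f x = if x = n-1 then 1 else x % 2` has no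
three consecutive arcs (around the cycle) of equal colour. -/
lemma stmt7_key (n a b c : ℕ) (hn : 2 ≤ n) (ha : a < n) (hb : b < n)
    (h1 : (b + 1) % n = a) (h2 : (a + 1) % n = c) :
    ¬ (((if b = n - 1 then 1 else b % 2) = (if a = n - 1 then 1 else a % 2)) ∧
       ((if a = n - 1 then 1 else a % 2) = (if c = n - 1 then 1 else c % 2))) := by
  rintro ⟨e1, e2⟩
  by_cases hbe : b + 1 = n
  · have ha0 : a = 0 := by rw [← h1, hbe, Nat.mod_self]
    rw [if_pos (by omega : b = n - 1), ha0, if_neg (by omega : ¬ (0 = n - 1))] at e1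
    omega
  · have h1' : a = b + 1 := by rw [← h1]; exact Nat.mod_eq_of_lt (by omega)
    by_cases hae : a + 1 = n
    · have hc0 : c = 0 := by rw [← h2, hae, Nat.mod_self]
      rw [if_pos (by omega : a = n - 1), hc0, if_neg (by omega : ¬ (0 = n - 1))] at e2
      omega
    · rw [if_neg (by omega : ¬ b = n - 1), if_neg (by omega : ¬ a = n - 1)] at e1
      omega

/-- Every directed cycle of length n ≥ 2 has an nd-arc-colouring with 2 colours. -/
theorem stmt7 (n : ℕ) (hn : 2 ≤ n) :
    HasNDColoring (fun i j : ZMod n => j = i + 1) 2 := by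
  haveI : NeZero n := ⟨by omega⟩
  set A : ZMod n → ZMod n → Prop := fun i j => j = i + 1 with hA
  set f : ℕ → ℕ := fun x => if x = n - 1 then 1 else x % 2 with hf
  set γ : ZMod n → ZMod n → ℕ := fun u _ => f u.val with hγ
  have hval1 : (1 : ZMod n).val = 1 := ZMod.val_one_eq_one_mod n ▸ Nat.mod_eq_of_lt (by omega)
  have hsucc : ∀ u : ZMod n, (u + 1).val = (u.val + 1) % n := by
    intro u
    rw [ZMod.val_add, hval1]
  have hout : ∀ w : ZMod n, outColors A γ w = {f w.val} := by
    intro w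
    ext c
    simp only [outColors, Set.mem_setOf_eq, Set.mem_singleton_iff, hA, hγ]
    constructor
    · rintro ⟨v, -, h⟩; exact h.symm
    · rintro rfl; exact ⟨w + 1, rfl, rfl⟩
  have hin : ∀ w : ZMod n, inColors A γ w = {f (w - 1).val} := by
    intro w
    ext c
    simp only [inColors, Set.mem_setOf_eq, Set.mem_singleton_iff, hA, hγ]
    constructor
    · rintro ⟨v, hv, h⟩
      have : v = w - 1 := by rw [hv]; ring
      rw [← this]; exact h.symm
    · rintro rfl; exact ⟨w - 1, by ring, rfl⟩
  refine ⟨γ, ?_, ⟨?_, ?_⟩, ?_⟩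
  · intro u v _
    simp only [hγ, hf]
    split <;> omega
  · intro u v w huv huw hne
    exact absurd (huv.trans huw.symm) hne
  · intro u v w huv hwv hne
    exfalso
    apply hne
    have : (u : ZMod n) + 1 = w + 1 := by rw [← huv, ← hwv]
    exact add_right_cancel this
  · intro u v huv
    rw [hA] at huv
    subst huv
    intro hcontra
    rw [Prod.mk.injEq] at hcontra
    obtain ⟨h1, h2⟩ := hcontra
    rw [hout, hout] at h1
    rw [hin, hin] at h2
    have e1 : f u.val = f (u + 1).val := Set.singleton_eq_singleton_iff.mp h1
    have hsub : u + 1 - 1 = u := by ring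
    rw [hsub] at h2
    have e2 : f (u - 1).val = f u.val := Set.singleton_eq_singleton_iff.mp h2
    have hb1 : ((u - 1).val + 1) % n = u.val := by
      rw [← hsucc]; norm_num
    have hc1 : (u.val + 1) % n = (u + 1).val := (hsucc u).symm
    exact stmt7_key n u.val (u - 1).val (u + 1).val hn (ZMod.val_lt u)
      (ZMod.val_lt (u - 1)) hb1 hc1 ⟨e2, e1⟩
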